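/- arXiv:2603.10296 — 3 statements merged into one kernel-verified Lean document; each statement's English description precedes it below -/
import Mathlib

section
/- For every density operator ρ on ℂ³ ⊗ ℂ³ (i.e., every positive semidefinite matrix ρ ∈ M₉(ℂ) with trace 1) and every choice of unit vectors a, a', b, b' ∈ ℝ³, one has |tr(ρ · B(a,a',b,b'))| ≤ 2. In other words, no two-qutrit state violates the CHSH inequality under spin-1 measurements. -/
set_option maxHeartbeats 1000000

open Matrix Polynomial
open scoped Kronecker Matrix.Norms.L2Operator ComplexOrder

noncomputable def Sx : Matrix (Fin 3) (Fin 3) ℂ :=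
  ((Real.sqrt 2 : ℝ) : ℂ)⁻¹ • !![0, 1, 0; 1, 0, 1; 0, 1, 0]

noncomputable def Sy : Matrix (Fin 3) (Fin 3) ℂ :=
  ((Real.sqrt 2 : ℝ) : ℂ)⁻¹ •
    !![0, -Complex.I, 0; Complex.I, 0, -Complex.I; 0, Complex.I, 0]

def Sz : Matrix (Fin 3) (Fin 3) ℂ := !![1, 0, 0; 0, 0, 0; 0, 0, -1]

noncomputable def Svec : Fin 3 → Matrix (Fin 3) (Fin 3) ℂ := ![Sx, Sy, Sz]

noncomputable def Sdir (u : Fin 3 → ℝ) : Matrix (Fin 3) (Fin 3) ℂ :=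
  (u 0 : ℂ) • Sx + (u 1 : ℂ) • Sy + (u 2 : ℂ) • Sz

noncomputable def Bell (a a' b b' : Fin 3 → ℝ) :
    Matrix (Fin 3 × Fin 3) (Fin 3 × Fin 3) ℂ :=
  Sdir a ⊗ₖ Sdir b + Sdir a ⊗ₖ Sdir b' + Sdir a' ⊗ₖ Sdir b - Sdir a' ⊗ₖ Sdir b'

noncomputable def K (M : Matrix (Fin 3) (Fin 3) ℝ) :
    Matrix (Fin 3 × Fin 3) (Fin 3 × Fin 3) ℂ :=
  ∑ i : Fin 3, ∑ j : Fin 3, (M i j : ℂ) • (Svec i ⊗ₖ Svec j)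

noncomputable def Hst (s t : ℝ) : Matrix (Fin 3 × Fin 3) (Fin 3 × Fin 3) ℂ :=
  (s : ℂ) • (Sx ⊗ₖ Sx) + (t : ℂ) • (Sz ⊗ₖ Sz)


noncomputable def ket (i j : Fin 3) : (Fin 3 × Fin 3) → ℂ := Pi.single (i, j) 1

/-- `u` is a unit vector of `ℝ³`. -/
def IsUnitVec (u : Fin 3 → ℝ) : Prop := u 0 ^ 2 + u 1 ^ 2 + u 2 ^ 2 = 1

/-! ### Auxiliary material -/

noncomputable def cvec (u : Fin 3 → ℝ) : Fin 3 → ℂ :=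
  ![(-(u 0 : ℂ) + (u 1 : ℂ) * Complex.I) * ((Real.sqrt 2 : ℝ) : ℂ)⁻¹, (u 2 : ℂ),
    ((u 0 : ℂ) + (u 1 : ℂ) * Complex.I) * ((Real.sqrt 2 : ℝ) : ℂ)⁻¹]

lemma sqrt2_ne : ((Real.sqrt 2 : ℝ) : ℂ) ≠ 0 := by
  simpa using (Real.sqrt_pos.mpr (by norm_num : (0:ℝ) < 2)).ne'

lemma sqrt2_sq : ((Real.sqrt 2 : ℝ) : ℂ) ^ 2 = 2 := by
  norm_cast; rw [sq]; exact Real.mul_self_sqrt (by norm_num)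

lemma Sdir_eq (u : Fin 3 → ℝ) :
    Sdir u = ((Real.sqrt 2 : ℝ) : ℂ)⁻¹ •
      !![((Real.sqrt 2:ℝ):ℂ) * (u 2), (u 0:ℂ) - (u 1:ℂ) * Complex.I, 0;
         (u 0:ℂ) + (u 1:ℂ) * Complex.I, 0, (u 0:ℂ) - (u 1:ℂ) * Complex.I;
         0, (u 0:ℂ) + (u 1:ℂ) * Complex.I, -(((Real.sqrt 2:ℝ):ℂ) * (u 2))] := by
  have hne := sqrt2_ne
  ext i j
  fin_cases i <;> fin_cases j <;>
    first
    | (simp [Sdir, Sx, Sy, Sz, Matrix.vecHead, Matrix.vecTail]; try field_simp; try ring)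

lemma Sdir_mul_Sdir (p q : Fin 3 → ℝ) :
    Sdir p * Sdir q =
      ((p 0 * q 0 + p 1 * q 1 + p 2 * q 2 : ℝ) : ℂ) • (1 : Matrix (Fin 3) (Fin 3) ℂ)
        - Matrix.vecMulVec (cvec q) (star (cvec p)) := by
  have h2s := sqrt2_sq
  have hne := sqrt2_ne
  ext i j
  fin_cases i <;> fin_cases j <;>
    · simp [Sdir_eq, cvec, Matrix.mul_apply, Fin.sum_univ_three, Matrix.vecMulVec_apply,
        Matrix.one_apply, Matrix.vecHead, Matrix.vecTail, Complex.star_def,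
        _root_.map_add, _root_.map_mul, -Matrix.cons_vecMulVec]
      try field_simp
      try ring_nf
      try (simp only [Complex.I_sq]; linear_combination (-((p 0 : ℂ) * (q 0 : ℂ) + (p 1 : ℂ) * (q 1 : ℂ))) * h2s)

lemma Sdir_herm (u : Fin 3 → ℝ) : (Sdir u)ᴴ = Sdir u := by
  ext i j
  fin_cases i <;> fin_cases j <;>
    simp [Sdir_eq, Matrix.conjTranspose_apply, Matrix.vecHead, Matrix.vecTail,
      Complex.star_def, _root_.map_mul, _root_.map_add] <;> ring

/-- squared ℓ² norm of a complex vector -/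
noncomputable def Nsq {ι : Type*} [Fintype ι] (v : ι → ℂ) : ℝ :=
  ∑ i, Complex.normSq (v i)

lemma Nsq_nonneg {ι : Type*} [Fintype ι] (v : ι → ℂ) : 0 ≤ Nsq v :=
  Finset.sum_nonneg fun _ _ => Complex.normSq_nonneg _

lemma dot_self_eq_Nsq {ι : Type*} [Fintype ι] (v : ι → ℂ) :
    star v ⬝ᵥ v = (Nsq v : ℂ) := by
  simp only [dotProduct, Pi.star_apply, Nsq, Complex.ofReal_sum]
  refine Finset.sum_congr rfl fun i _ => ?_
  rw [Complex.star_def, Complex.normSq_eq_conj_mul_self]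

lemma abs_dot_sq_le {ι : Type*} [Fintype ι] (v w : ι → ℂ) :
    ‖star v ⬝ᵥ w‖ ^ 2 ≤ Nsq v * Nsq w := by
  let v' : EuclideanSpace ℂ ι := (WithLp.equiv 2 (ι → ℂ)).symm v
  let w' : EuclideanSpace ℂ ι := (WithLp.equiv 2 (ι → ℂ)).symm w
  have hinner : (inner ℂ v' w' : ℂ) = star v ⬝ᵥ w := by
    simp [v', w', PiLp.inner_apply, RCLike.inner_apply, dotProduct, Pi.star_apply,
      Complex.star_def, mul_comm]
  have h := norm_inner_le_norm (𝕜 := ℂ) v' w'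
  have hv : ‖v'‖ ^ 2 = Nsq v := by
    rw [EuclideanSpace.norm_eq, Real.sq_sqrt (by positivity)]
    simp [v', Nsq, Complex.sq_norm]
  have hw : ‖w'‖ ^ 2 = Nsq w := by
    rw [EuclideanSpace.norm_eq, Real.sq_sqrt (by positivity)]
    simp [w', Nsq, Complex.sq_norm]
  calc ‖star v ⬝ᵥ w‖ ^ 2 = ‖(inner ℂ v' w' : ℂ)‖ ^ 2 := by
        rw [hinner]
    _ ≤ (‖v'‖ * ‖w'‖) ^ 2 := by
        have := norm_nonneg (inner ℂ v' w' : ℂ)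
        nlinarith [h]
    _ = Nsq v * Nsq w := by rw [mul_pow, hv, hw]

lemma dot_star_comm {ι : Type*} [Fintype ι] (v w : ι → ℂ) :
    star w ⬝ᵥ v = (starRingEnd ℂ) (star v ⬝ᵥ w) := by
  simp only [dotProduct, Pi.star_apply, map_sum, _root_.map_mul, Complex.star_def,
    Complex.conj_conj]
  exact Finset.sum_congr rfl fun i _ => mul_comm _ _

/-- quadratic-form version of the product identity -/
lemma Nsq_Sdir_mulVec (p : Fin 3 → ℝ) (w : Fin 3 → ℂ) :
    Nsq (Sdir p *ᵥ w) =
      (p 0 ^ 2 + p 1 ^ 2 + p 2 ^ 2) * Nsq w - Complex.normSq (star (cvec p) ⬝ᵥ w) := by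
  have key : star (Sdir p *ᵥ w) ⬝ᵥ (Sdir p *ᵥ w)
      = ((p 0 ^ 2 + p 1 ^ 2 + p 2 ^ 2 : ℝ) : ℂ) * (star w ⬝ᵥ w)
        - (star w ⬝ᵥ cvec p) * (star (cvec p) ⬝ᵥ w) := by
    rw [star_mulVec, ← dotProduct_mulVec, mulVec_mulVec]
    rw [show (Sdir p)ᴴ * Sdir p = Sdir p * Sdir p from by rw [Sdir_herm]]
    rw [Sdir_mul_Sdir p p]
    rw [sub_mulVec, dotProduct_sub, smul_mulVec, one_mulVec, dotProduct_smul]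
    congr 1
    · push_cast [smul_eq_mul]; ring
    · rw [show Matrix.vecMulVec (cvec p) (star (cvec p)) *ᵥ w
          = (star (cvec p) ⬝ᵥ w) • cvec p from ?_]
      · rw [dotProduct_smul, smul_eq_mul]; ring
      · funext i
        simp [Matrix.vecMulVec_apply, Matrix.mulVec, dotProduct, Finset.sum_mul,
          Finset.mul_sum]
        exact Finset.sum_congr rfl fun j _ => by ring
  have hconj : star w ⬝ᵥ cvec p = (starRingEnd ℂ) (star (cvec p) ⬝ᵥ w) := by
    simpa using dot_star_comm (cvec p) w
  rw [dot_self_eq_Nsq, dot_self_eq_Nsq, hconj] at key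
  have : ((Nsq (Sdir p *ᵥ w) : ℝ) : ℂ)
      = (((p 0 ^ 2 + p 1 ^ 2 + p 2 ^ 2) * Nsq w - Complex.normSq (star (cvec p) ⬝ᵥ w) : ℝ) : ℂ) := by
    rw [key]
    rw [← Complex.normSq_eq_conj_mul_self]
    push_cast; ring
  exact_mod_cast this

lemma Nsq_Sdir_le (a : Fin 3 → ℝ) (ha : IsUnitVec a) (w : Fin 3 → ℂ) :
    Nsq (Sdir a *ᵥ w) ≤ Nsq w := by
  rw [Nsq_Sdir_mulVec, ha, one_mul]
  have := Complex.normSq_nonneg (star (cvec a) ⬝ᵥ w)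
  linarith

noncomputable def ycon (c : Fin 3 → ℂ) (x : Fin 3 × Fin 3 → ℂ) : Fin 3 → ℂ :=
  fun i => star c ⬝ᵥ fun j => x (i, j)

lemma Nsq_prod_rows (x : Fin 3 × Fin 3 → ℂ) :
    Nsq x = ∑ i : Fin 3, Nsq (fun j => x (i, j)) := by
  rw [Nsq, Fintype.sum_prod_type]; rfl

lemma Nsq_prod_cols (x : Fin 3 × Fin 3 → ℂ) :
    Nsq x = ∑ j : Fin 3, Nsq (fun i => x (i, j)) := by
  rw [Nsq, Fintype.sum_prod_type, Finset.sum_comm]; rfl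

lemma kron_one_mulVec (A : Matrix (Fin 3) (Fin 3) ℂ) (x : Fin 3 × Fin 3 → ℂ) (i j : Fin 3) :
    ((A ⊗ₖ (1 : Matrix (Fin 3) (Fin 3) ℂ)) *ᵥ x) (i, j) = (A *ᵥ fun k => x (k, j)) i := by
  simp only [Matrix.mulVec, dotProduct, Fintype.sum_prod_type, Matrix.kroneckerMap_apply,
    Matrix.one_apply, mul_ite, mul_one, mul_zero, ite_mul, zero_mul]
  rw [Finset.sum_congr rfl (fun k _ => Finset.sum_ite_eq (Finset.univ : Finset (Fin 3)) j
    (fun l => A i k * x (k, l)))]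
  simp

lemma one_kron_mulVec (B : Matrix (Fin 3) (Fin 3) ℂ) (x : Fin 3 × Fin 3 → ℂ) (i j : Fin 3) :
    (((1 : Matrix (Fin 3) (Fin 3) ℂ) ⊗ₖ B) *ᵥ x) (i, j) = (B *ᵥ fun l => x (i, l)) j := by
  simp only [Matrix.mulVec, dotProduct, Fintype.sum_prod_type, Matrix.kroneckerMap_apply,
    Matrix.one_apply]
  rw [Finset.sum_comm]
  simp only [ite_mul, one_mul, zero_mul, Finset.sum_ite_eq, Finset.mem_univ, if_true]

lemma Nsq_kron_one_le (a : Fin 3 → ℝ) (ha : IsUnitVec a) (x : Fin 3 × Fin 3 → ℂ) :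
    Nsq ((Sdir a ⊗ₖ (1 : Matrix (Fin 3) (Fin 3) ℂ)) *ᵥ x) ≤ Nsq x := by
  rw [Nsq_prod_cols ((Sdir a ⊗ₖ (1 : Matrix (Fin 3) (Fin 3) ℂ)) *ᵥ x), Nsq_prod_cols x]
  refine Finset.sum_le_sum fun j _ => ?_
  have h := Nsq_Sdir_le a ha (fun k => x (k, j))
  have he : (fun i => ((Sdir a ⊗ₖ (1 : Matrix (Fin 3) (Fin 3) ℂ)) *ᵥ x) (i, j))
      = Sdir a *ᵥ fun k => x (k, j) := funext fun i => kron_one_mulVec _ _ i j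
  rw [he]; exact h

lemma Nsq_one_kron (p : Fin 3 → ℝ) (x : Fin 3 × Fin 3 → ℂ) :
    Nsq (((1 : Matrix (Fin 3) (Fin 3) ℂ) ⊗ₖ Sdir p) *ᵥ x)
      = (p 0 ^ 2 + p 1 ^ 2 + p 2 ^ 2) * Nsq x - Nsq (ycon (cvec p) x) := by
  rw [Nsq_prod_rows (((1 : Matrix (Fin 3) (Fin 3) ℂ) ⊗ₖ Sdir p) *ᵥ x), Nsq_prod_rows x]
  have he : ∀ i : Fin 3, (fun j => (((1 : Matrix (Fin 3) (Fin 3) ℂ) ⊗ₖ Sdir p) *ᵥ x) (i, j))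
      = Sdir p *ᵥ fun l => x (i, l) := fun i => funext fun j => one_kron_mulVec _ _ i j
  calc (∑ i : Fin 3, Nsq fun j => (((1 : Matrix (Fin 3) (Fin 3) ℂ) ⊗ₖ Sdir p) *ᵥ x) (i, j))
      = ∑ i : Fin 3, ((p 0 ^ 2 + p 1 ^ 2 + p 2 ^ 2) * Nsq (fun l => x (i, l))
          - Complex.normSq (star (cvec p) ⬝ᵥ fun l => x (i, l))) := by
        refine Finset.sum_congr rfl fun i _ => ?_
        rw [he i]; exact Nsq_Sdir_mulVec p _
    _ = (p 0 ^ 2 + p 1 ^ 2 + p 2 ^ 2) * ∑ i : Fin 3, Nsq (fun j => x (i, j))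
          - Nsq (ycon (cvec p) x) := by
        rw [Finset.sum_sub_distrib, Finset.mul_sum]
        congr 1

lemma cross_eq (M : Matrix (Fin 3) (Fin 3) ℂ) (c d : Fin 3 → ℂ) (x : Fin 3 × Fin 3 → ℂ) :
    star x ⬝ᵥ ((M ⊗ₖ Matrix.vecMulVec c (star d)) *ᵥ x)
      = star (ycon c x) ⬝ᵥ (M *ᵥ ycon d x) := by
  simp only [dotProduct, Matrix.mulVec, Fintype.sum_prod_type, Matrix.kroneckerMap_apply,
    Matrix.vecMulVec_apply, ycon, Pi.star_apply, dotProduct, Fin.sum_univ_three,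
    Finset.mul_sum, Finset.sum_mul, star_sum, star_mul', star_star, Complex.star_def,
    map_sum, _root_.map_mul, _root_.map_add, Complex.conj_conj]
  ring

lemma kron_conjT (A B : Matrix (Fin 3) (Fin 3) ℂ) : (A ⊗ₖ B)ᴴ = Aᴴ ⊗ₖ Bᴴ := by
  ext ij kl
  obtain ⟨i, j⟩ := ij; obtain ⟨k, l⟩ := kl
  simp [Matrix.conjTranspose_apply, Matrix.kroneckerMap_apply, star_mul', mul_comm]

lemma kron_neg (A B : Matrix (Fin 3) (Fin 3) ℂ) : A ⊗ₖ (-B) = -(A ⊗ₖ B) := by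
  ext ij kl
  obtain ⟨i, j⟩ := ij; obtain ⟨k, l⟩ := kl
  simp [Matrix.kroneckerMap_apply]

lemma kron_sub (X Y Z : Matrix (Fin 3) (Fin 3) ℂ) : X ⊗ₖ (Y - Z) = X ⊗ₖ Y - X ⊗ₖ Z := by
  ext ij kl
  obtain ⟨i, j⟩ := ij; obtain ⟨k, l⟩ := kl
  simp [Matrix.kroneckerMap_apply]
  ring

lemma bell_qf_bound (a a' b b' : Fin 3 → ℝ) (ha : IsUnitVec a) (ha' : IsUnitVec a')
    (hb : IsUnitVec b) (hb' : IsUnitVec b') (x : Fin 3 × Fin 3 → ℂ) :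
    ‖star x ⬝ᵥ (Bell a a' b b' *ᵥ x)‖ ≤ 2 * Nsq x := by
  classical
  have hb1 : b 0 ^ 2 + b 1 ^ 2 + b 2 ^ 2 = 1 := hb
  have hb'1 : b' 0 ^ 2 + b' 1 ^ 2 + b' 2 ^ 2 = 1 := hb'
  set p : Fin 3 → ℝ := fun i => b i + b' i with hp
  set q : Fin 3 → ℝ := fun i => b i - b' i with hq
  have hSp : Sdir p = Sdir b + Sdir b' := by
    simp only [Sdir, hp, Complex.ofReal_add, add_smul]; abel
  have hSq : Sdir q = Sdir b - Sdir b' := by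
    simp only [Sdir, hq, Complex.ofReal_sub, sub_smul]; abel
  have hBell : Bell a a' b b' = Sdir a ⊗ₖ Sdir p + Sdir a' ⊗ₖ Sdir q := by
    rw [Bell, hSp, hSq, Matrix.kronecker_add, kron_sub]; abel
  set A1 : Matrix (Fin 3 × Fin 3) (Fin 3 × Fin 3) ℂ := Sdir a ⊗ₖ Sdir p with hA1def
  set A2 : Matrix (Fin 3 × Fin 3) (Fin 3 × Fin 3) ℂ := Sdir a' ⊗ₖ Sdir q with hA2def
  set u1 := A1 *ᵥ x with hu1
  set u2 := A2 *ᵥ x with hu2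
  set yp := ycon (cvec p) x with hyp
  set yq := ycon (cvec q) x with hyq
  set P := Nsq yp with hPdef
  set Q := Nsq yq with hQdef
  set n := Nsq x with hndef
  have hPnn : 0 ≤ P := Nsq_nonneg _
  have hQnn : 0 ≤ Q := Nsq_nonneg _
  have hnnn : 0 ≤ n := Nsq_nonneg _
  have hppqq4 : (p 0 ^ 2 + p 1 ^ 2 + p 2 ^ 2) + (q 0 ^ 2 + q 1 ^ 2 + q 2 ^ 2) = 4 := by
    simp only [hp, hq]
    linear_combination 2 * hb1 + 2 * hb'1
  have hpq0 : p 0 * q 0 + p 1 * q 1 + p 2 * q 2 = 0 := by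
    simp only [hp, hq]
    linear_combination hb1 - hb'1
  have hNu1 : Nsq u1 ≤ (p 0 ^ 2 + p 1 ^ 2 + p 2 ^ 2) * n - P := by
    have hfac : A1 = (Sdir a ⊗ₖ (1 : Matrix (Fin 3) (Fin 3) ℂ))
        * ((1 : Matrix (Fin 3) (Fin 3) ℂ) ⊗ₖ Sdir p) := by
      rw [← Matrix.mul_kronecker_mul, Matrix.mul_one, Matrix.one_mul]
    calc Nsq u1 = Nsq ((Sdir a ⊗ₖ (1 : Matrix (Fin 3) (Fin 3) ℂ)) *ᵥ
            (((1 : Matrix (Fin 3) (Fin 3) ℂ) ⊗ₖ Sdir p) *ᵥ x)) := by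
          rw [hu1, hfac, ← Matrix.mulVec_mulVec]
      _ ≤ Nsq (((1 : Matrix (Fin 3) (Fin 3) ℂ) ⊗ₖ Sdir p) *ᵥ x) := Nsq_kron_one_le a ha _
      _ = (p 0 ^ 2 + p 1 ^ 2 + p 2 ^ 2) * n - P := Nsq_one_kron p x
  have hNu2 : Nsq u2 ≤ (q 0 ^ 2 + q 1 ^ 2 + q 2 ^ 2) * n - Q := by
    have hfac : A2 = (Sdir a' ⊗ₖ (1 : Matrix (Fin 3) (Fin 3) ℂ))
        * ((1 : Matrix (Fin 3) (Fin 3) ℂ) ⊗ₖ Sdir q) := by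
      rw [← Matrix.mul_kronecker_mul, Matrix.mul_one, Matrix.one_mul]
    calc Nsq u2 = Nsq ((Sdir a' ⊗ₖ (1 : Matrix (Fin 3) (Fin 3) ℂ)) *ᵥ
            (((1 : Matrix (Fin 3) (Fin 3) ℂ) ⊗ₖ Sdir q) *ᵥ x)) := by
          rw [hu2, hfac, ← Matrix.mulVec_mulVec]
      _ ≤ Nsq (((1 : Matrix (Fin 3) (Fin 3) ℂ) ⊗ₖ Sdir q) *ᵥ x) := Nsq_kron_one_le a' ha' _
      _ = (q 0 ^ 2 + q 1 ^ 2 + q 2 ^ 2) * n - Q := Nsq_one_kron q x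
  have hcrossM : A1ᴴ * A2
      = -((Sdir a * Sdir a') ⊗ₖ Matrix.vecMulVec (cvec q) (star (cvec p))) := by
    rw [hA1def, hA2def, kron_conjT, Sdir_herm, Sdir_herm, ← Matrix.mul_kronecker_mul,
      Sdir_mul_Sdir p q, hpq0]
    rw [show ((0 : ℝ) : ℂ) • (1 : Matrix (Fin 3) (Fin 3) ℂ)
        - Matrix.vecMulVec (cvec q) (star (cvec p))
        = -(Matrix.vecMulVec (cvec q) (star (cvec p))) from by simp]
    rw [kron_neg]
  have hcross : star u1 ⬝ᵥ u2 = -(star yq ⬝ᵥ ((Sdir a * Sdir a') *ᵥ yp)) := by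
    rw [hu1, hu2, star_mulVec, ← dotProduct_mulVec, Matrix.mulVec_mulVec, hcrossM,
      Matrix.neg_mulVec, dotProduct_neg, cross_eq]
  have hcross_sq : ‖star u1 ⬝ᵥ u2‖ ^ 2 ≤ Q * P := by
    have habsneg : ‖star u1 ⬝ᵥ u2‖
        = ‖star yq ⬝ᵥ ((Sdir a * Sdir a') *ᵥ yp)‖ := by
      rw [hcross, norm_neg]
    rw [habsneg]
    refine le_trans (abs_dot_sq_le yq _) ?_
    have h1 : Nsq ((Sdir a * Sdir a') *ᵥ yp) ≤ P := by
      rw [← Matrix.mulVec_mulVec]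
      exact le_trans (Nsq_Sdir_le a ha _) (Nsq_Sdir_le a' ha' _)
    exact mul_le_mul_of_nonneg_left h1 hQnn
  have hadd : Nsq (u1 + u2) ≤ Nsq u1 + Nsq u2 + 2 * ‖star u1 ⬝ᵥ u2‖ := by
    have hC : ((Nsq (u1 + u2) : ℝ) : ℂ) = ((Nsq u1 + Nsq u2 : ℝ) : ℂ)
        + (star u1 ⬝ᵥ u2 + (starRingEnd ℂ) (star u1 ⬝ᵥ u2)) := by
      rw [← dot_self_eq_Nsq]
      have : star (u1 + u2) ⬝ᵥ (u1 + u2)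
          = star u1 ⬝ᵥ u1 + star u2 ⬝ᵥ u2 + (star u1 ⬝ᵥ u2 + star u2 ⬝ᵥ u1) := by
        rw [star_add, add_dotProduct, dotProduct_add, dotProduct_add]
        ring
      rw [this, dot_self_eq_Nsq, dot_self_eq_Nsq, ← dot_star_comm]
      push_cast
      ring
    have hre := congrArg Complex.re hC
    rw [Complex.add_conj] at hre
    simp only [Complex.ofReal_re, Complex.add_re, Complex.ofReal_mul] at hre
    have : Nsq (u1 + u2) = Nsq u1 + Nsq u2 + 2 * (star u1 ⬝ᵥ u2).re := by
      simpa using hre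
    rw [this]
    have := Complex.re_le_norm (star u1 ⬝ᵥ u2)
    linarith
  have habs2 : ‖star x ⬝ᵥ (Bell a a' b b' *ᵥ x)‖ ^ 2 ≤ n * Nsq (u1 + u2) := by
    have : Bell a a' b b' *ᵥ x = u1 + u2 := by
      rw [hBell, Matrix.add_mulVec]
    rw [this]
    exact abs_dot_sq_le x (u1 + u2)
  set T := ‖star x ⬝ᵥ (Bell a a' b b' *ᵥ x)‖ with hT
  have hTnn : 0 ≤ T := norm_nonneg _
  have hCnn : 0 ≤ ‖star u1 ⬝ᵥ u2‖ := norm_nonneg _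
  have h2C : 2 * ‖star u1 ⬝ᵥ u2‖ ≤ P + Q := by
    nlinarith [sq_nonneg (P - Q), hcross_sq, hCnn, hPnn, hQnn]
  have hT2 : T ^ 2 ≤ (2 * n) ^ 2 := by
    nlinarith [habs2, hadd, hNu1, hNu2, h2C, hnnn, hppqq4, Nsq_nonneg (u1 + u2)]
  nlinarith [hT2, hTnn, hnnn]

/-- Every two-qutrit density operator satisfies the CHSH inequality
under spin-1 measurements: `|tr(ρ B(a,a',b,b'))| ≤ 2`. -/
theorem chsh_density_operator_bound
    (ρ : Matrix (Fin 3 × Fin 3) (Fin 3 × Fin 3) ℂ)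
    (hρ : ρ.PosSemidef) (hρtr : ρ.trace = 1)
    (a a' b b' : Fin 3 → ℝ)
    (ha : IsUnitVec a) (ha' : IsUnitVec a') (hb : IsUnitVec b) (hb' : IsUnitVec b') :
    ‖(ρ * Bell a a' b b').trace‖ ≤ 2 := by
  classical
  open scoped MatrixOrder in
  obtain ⟨C, hC⟩ := CStarAlgebra.nonneg_iff_eq_star_mul_self.mp hρ.nonneg
  rw [Matrix.star_eq_conjTranspose] at hC
  set X : (Fin 3 × Fin 3) → (Fin 3 × Fin 3) → ℂ := fun i j => star (C i j) with hX
  have hdiag : ∀ i, (C * Bell a a' b b' * Cᴴ) i i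
      = star (X i) ⬝ᵥ (Bell a a' b b' *ᵥ X i) := by
    intro i
    simp only [Matrix.mul_apply, Matrix.conjTranspose_apply, dotProduct, Matrix.mulVec,
      Pi.star_apply, hX, star_star, Finset.sum_mul, Finset.mul_sum, dotProduct]
    rw [Finset.sum_comm]
    refine Finset.sum_congr rfl fun j _ => Finset.sum_congr rfl fun k _ => ?_
    ring
  have htr : (ρ * Bell a a' b b').trace = ∑ i, star (X i) ⬝ᵥ (Bell a a' b b' *ᵥ X i) := by
    rw [hC, Matrix.mul_assoc, Matrix.trace_mul_comm]
    simp only [Matrix.trace, Matrix.diag_apply]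
    exact Finset.sum_congr rfl fun i _ => hdiag i
  have htrρ : ∑ i, Nsq (X i) = 1 := by
    have h1 : ((∑ i, Nsq (X i) : ℝ) : ℂ) = ρ.trace := by
      rw [hC]
      simp only [Nsq, hX, Matrix.trace, Matrix.diag_apply, Matrix.mul_apply,
        Matrix.conjTranspose_apply, Complex.ofReal_sum]
      rw [Finset.sum_comm]
      refine Finset.sum_congr rfl fun i _ => Finset.sum_congr rfl fun j _ => ?_
      rw [Complex.star_def, Complex.normSq_conj, Complex.normSq_eq_conj_mul_self]
    rw [hρtr] at h1
    exact_mod_cast h1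
  rw [htr]
  calc ‖∑ i, star (X i) ⬝ᵥ (Bell a a' b b' *ᵥ X i)‖
      ≤ ∑ i, ‖star (X i) ⬝ᵥ (Bell a a' b b' *ᵥ X i)‖ :=
        norm_sum_le _ _
    _ ≤ ∑ i, 2 * Nsq (X i) :=
        Finset.sum_le_sum fun i _ => bell_qf_bound a a' b b' ha ha' hb hb' (X i)
    _ = 2 := by rw [← Finset.mul_sum, htrρ, mul_one]
end

section
/- For all s, t ∈ ℝ, the characteristic polynomial of the 9×9 matrix H_{s,t} = s·S_x⊗S_x + t·S_z⊗S_z is X³(X² − s²)(X² − t²)(X² − s² − t²). Consequently, for s, t ≥ 0 the spectrum of H_{s,t} (with multiplicity) is {0, 0, 0, ±s, ±t, ±√(s²+t²)}. -/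
open Matrix Polynomial
open scoped Kronecker Matrix.Norms.L2Operator

set_option maxRecDepth 40000
set_option maxHeartbeats 2000000

def eOE : (Fin 3 × Fin 3) ≃ (Fin 5 ⊕ Fin 4) where
  toFun p := ![![Sum.inl 0, Sum.inr 0, Sum.inl 1],
               ![Sum.inr 1, Sum.inl 2, Sum.inr 2],
               ![Sum.inl 3, Sum.inr 3, Sum.inl 4]] p.1 p.2
  invFun := Sum.elim ![(0,0),(0,2),(1,1),(2,0),(2,2)] ![(0,1),(1,0),(1,2),(2,1)]
  left_inv := by decide
  right_inv := by decide

lemma detA' {R : Type*} [CommRing R] (x a b : R) :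
    (!![x-b, 0, -a, 0, 0; 0, x+b, -a, 0, 0; -a, -a, x, -a, -a; 0, 0, -a, x+b, 0; 0, 0, -a, 0, x-b] : Matrix (Fin 5) (Fin 5) R).det
      = x * (x^2 - b^2) * (x^2 - (2*a)^2 - b^2) := by
  simp [Matrix.det_succ_row_zero, Fin.sum_univ_succ, Fin.succAbove]
  ring

lemma detD' {R : Type*} [CommRing R] (x a : R) :
    (!![x, -a, -a, 0; -a, x, 0, -a; -a, 0, x, -a; 0, -a, -a, x] : Matrix (Fin 4) (Fin 4) R).det
      = x^2 * (x^2 - (2*a)^2) := by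
  simp [Matrix.det_succ_row_zero, Fin.sum_univ_succ, Fin.succAbove]
  ring

theorem Hst_charpoly_eq (s t : ℝ) :
    (Hst s t).charpoly =
        X ^ 3 * (X ^ 2 - C ((s : ℂ) ^ 2)) * (X ^ 2 - C ((t : ℂ) ^ 2)) *
          (X ^ 2 - C ((s : ℂ) ^ 2 + (t : ℂ) ^ 2)) := by
  have h2 : (((Real.sqrt 2 : ℝ) : ℂ))⁻¹ ^ 2 = 1/2 := by
    rw [sq, ← mul_inv]
    norm_num [← Complex.ofReal_mul, ← Real.sqrt_mul_self (by norm_num : (0:ℝ) ≤ 2)]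
  set c : ℂ := (s:ℂ)/2 with hc
  have hre : reindex eOE eOE (Hst s t) =
      fromBlocks
        !![(t:ℂ),0,c,0,0; 0,-(t:ℂ),c,0,0; c,c,0,c,c; 0,0,c,-(t:ℂ),0; 0,0,c,0,(t:ℂ)]
        0 0
        !![0,c,c,0; c,0,0,c; c,0,0,c; 0,c,c,0] := by
    ext i j : 2
    cases i <;> cases j <;> rename_i i j <;> fin_cases i <;> fin_cases j <;>
      · simp [eOE, Hst, Sx, Sz, Matrix.reindex_apply, Matrix.submatrix_apply, fromBlocks,
          Matrix.vecHead, Matrix.vecTail, hc]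
        try (ring_nf; simp [h2]; try ring)
  have key := Matrix.charpoly_reindex eOE (Hst s t)
  rw [hre, Matrix.charpoly_fromBlocks_zero₂₁] at key
  rw [← key]
  have hcmA : charmatrix !![(t:ℂ),0,c,0,0; 0,-(t:ℂ),c,0,0; c,c,0,c,c; 0,0,c,-(t:ℂ),0; 0,0,c,0,(t:ℂ)]
      = !![X - C (t:ℂ), 0, -C c, 0, 0; 0, X + C (t:ℂ), -C c, 0, 0; -C c, -C c, X, -C c, -C c;
           0, 0, -C c, X + C (t:ℂ), 0; 0, 0, -C c, 0, X - C (t:ℂ)] := by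
    ext i j : 2
    fin_cases i <;> fin_cases j <;>
      simp [charmatrix_apply, Matrix.vecHead, Matrix.vecTail, sub_eq_add_neg]
  have hcmD : charmatrix !![(0:ℂ),c,c,0; c,0,0,c; c,0,0,c; 0,c,c,0]
      = !![X, -C c, -C c, 0; -C c, X, 0, -C c; -C c, 0, X, -C c; 0, -C c, -C c, X] := by
    ext i j : 2
    fin_cases i <;> fin_cases j <;>
      simp [charmatrix_apply, Matrix.vecHead, Matrix.vecTail]
  rw [Matrix.charpoly, Matrix.charpoly, hcmA, hcmD, detA', detD']
  have hs : (2:ℂ[X]) * C c = C (s:ℂ) := by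
    rw [show (2:ℂ[X]) = C 2 from (map_ofNat C 2).symm, ← C_mul]
    congr 1
    rw [hc]; ring
  rw [hs]
  simp only [C_add, C_pow]
  ring

/-- The characteristic polynomial of `H_{s,t}` is
`X³(X² − s²)(X² − t²)(X² − s² − t²)`; consequently, for `s, t ≥ 0` its spectrum with
multiplicity (the multiset of roots) is `{0, 0, 0, ±s, ±t, ±√(s²+t²)}`. -/
theorem Hst_charpoly (s t : ℝ) :
    (Hst s t).charpoly =
        X ^ 3 * (X ^ 2 - C ((s : ℂ) ^ 2)) * (X ^ 2 - C ((t : ℂ) ^ 2)) *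
          (X ^ 2 - C ((s : ℂ) ^ 2 + (t : ℂ) ^ 2))
      ∧ (0 ≤ s → 0 ≤ t →
          (Hst s t).charpoly.roots =
            {0, 0, 0, (s : ℂ), -(s : ℂ), (t : ℂ), -(t : ℂ),
              ((Real.sqrt (s ^ 2 + t ^ 2) : ℝ) : ℂ),
              -((Real.sqrt (s ^ 2 + t ^ 2) : ℝ) : ℂ)}) := by
  refine ⟨Hst_charpoly_eq s t, fun hs ht => ?_⟩
  rw [Hst_charpoly_eq s t]
  set r : ℂ := ((Real.sqrt (s ^ 2 + t ^ 2) : ℝ) : ℂ) with hr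
  have hr2 : r ^ 2 = (s:ℂ)^2 + (t:ℂ)^2 := by
    rw [hr, ← Complex.ofReal_pow, Real.sq_sqrt (by positivity)]
    push_cast; ring
  have hfac : X ^ 3 * (X ^ 2 - C ((s : ℂ) ^ 2)) * (X ^ 2 - C ((t : ℂ) ^ 2)) *
          (X ^ 2 - C ((s : ℂ) ^ 2 + (t : ℂ) ^ 2))
      = (({0, 0, 0, (s : ℂ), -(s : ℂ), (t : ℂ), -(t : ℂ), r, -r} : Multiset ℂ).map
          fun a => X - C a).prod := by
    simp only [Multiset.insert_eq_cons, Multiset.map_cons, Multiset.prod_cons,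
      Multiset.map_singleton, Multiset.prod_singleton, C_neg, C_add, C_pow, C_0]
    have hr2' : (C r : ℂ[X]) ^ 2 = C (s:ℂ) ^ 2 + C (t:ℂ) ^ 2 := by
      rw [← C_pow, hr2]; simp [C_add, C_pow]
    linear_combination (X^3 * (X^2 - C ((s:ℂ))^2) * (X^2 - C ((t:ℂ))^2)) * hr2'
  rw [hfac, roots_multiset_prod_X_sub_C]
end

section
/- For all s, t ≥ 0, the operator norm of H_{s,t} = s·S_x⊗S_x + t·S_z⊗S_z on ℂ³ ⊗ ℂ³ equals √(s² + t²). -/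
open Matrix Polynomial
open scoped Kronecker Matrix.Norms.L2Operator

def NN' : Matrix (Fin 3) (Fin 3) ℂ := !![0, 1, 0; 1, 0, 1; 0, 1, 0]

lemma SxSx' : Sx ⊗ₖ Sx = (2:ℂ)⁻¹ • (NN' ⊗ₖ NN') := by
  rw [Sx, smul_kronecker, kronecker_smul, smul_smul, ← mul_inv, ← Complex.ofReal_mul,
    Real.mul_self_sqrt (by norm_num)]
  norm_num [NN']

lemma Hst_mulVec (s t : ℝ) (y : Fin 3 × Fin 3 → ℂ) :
    Hst s t *ᵥ y = fun p =>
      ![![(t:ℂ)*y (0,0) + ((s/2:ℝ):ℂ)*y (1,1), ((s/2:ℝ):ℂ)*(y (1,0)+y (1,2)),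
          -((t:ℂ)*y (0,2)) + ((s/2:ℝ):ℂ)*y (1,1)],
        ![((s/2:ℝ):ℂ)*(y (0,1)+y (2,1)), ((s/2:ℝ):ℂ)*(y (0,0)+y (0,2)+y (2,0)+y (2,2)),
          ((s/2:ℝ):ℂ)*(y (0,1)+y (2,1))],
        ![-((t:ℂ)*y (2,0)) + ((s/2:ℝ):ℂ)*y (1,1), ((s/2:ℝ):ℂ)*(y (1,0)+y (1,2)),
          (t:ℂ)*y (2,2) + ((s/2:ℝ):ℂ)*y (1,1)]] p.1 p.2 := by
  funext p
  obtain ⟨i, j⟩ := p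
  fin_cases i <;> fin_cases j <;>
    simp [Hst, SxSx', NN', Sz, mulVec, dotProduct, Fintype.sum_prod_type,
      Fin.sum_univ_three] <;>
    push_cast <;> ring_nf <;> tauto

set_option maxHeartbeats 1000000 in
lemma aux_key (s t : ℝ) (a b c d e f g h k : ℂ) :
    ‖(t:ℂ)*a + ((s/2:ℝ):ℂ)*e‖^2 + ‖((s/2:ℝ):ℂ)*(h+k)‖^2 + ‖-((t:ℂ)*b) + ((s/2:ℝ):ℂ)*e‖^2
    + ‖((s/2:ℝ):ℂ)*(f+g)‖^2 + ‖((s/2:ℝ):ℂ)*(a+b+c+d)‖^2 + ‖((s/2:ℝ):ℂ)*(f+g)‖^2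
    + ‖-((t:ℂ)*c) + ((s/2:ℝ):ℂ)*e‖^2 + ‖((s/2:ℝ):ℂ)*(h+k)‖^2 + ‖(t:ℂ)*d + ((s/2:ℝ):ℂ)*e‖^2
    ≤ (s^2+t^2) * (‖a‖^2+‖f‖^2+‖b‖^2+‖h‖^2+‖e‖^2+‖k‖^2+‖c‖^2+‖g‖^2+‖d‖^2) := by
  rw [← sub_nonneg]
  have expand : (s^2+t^2) * (‖a‖^2+‖f‖^2+‖b‖^2+‖h‖^2+‖e‖^2+‖k‖^2+‖c‖^2+‖g‖^2+‖d‖^2)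
      - (‖(t:ℂ)*a + ((s/2:ℝ):ℂ)*e‖^2 + ‖((s/2:ℝ):ℂ)*(h+k)‖^2 + ‖-((t:ℂ)*b) + ((s/2:ℝ):ℂ)*e‖^2
        + ‖((s/2:ℝ):ℂ)*(f+g)‖^2 + ‖((s/2:ℝ):ℂ)*(a+b+c+d)‖^2 + ‖((s/2:ℝ):ℂ)*(f+g)‖^2
        + ‖-((t:ℂ)*c) + ((s/2:ℝ):ℂ)*e‖^2 + ‖((s/2:ℝ):ℂ)*(h+k)‖^2 + ‖(t:ℂ)*d + ((s/2:ℝ):ℂ)*e‖^2)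
      = (1/4)*((s*(a.re-b.re+c.re-d.re))^2 + (s*(a.im-b.im+c.im-d.im))^2
          + (s*(a.re+b.re-c.re-d.re))^2 + (s*(a.im+b.im-c.im-d.im))^2
          + (s*(a.re-b.re-c.re+d.re) - 2*t*e.re)^2 + (s*(a.im-b.im-c.im+d.im) - 2*t*e.im)^2)
        + (1/2)*((s*(f.re-g.re))^2 + (s*(f.im-g.im))^2 + (s*(h.re-k.re))^2 + (s*(h.im-k.im))^2)
        + ((t*f.re)^2 + (t*f.im)^2 + (t*g.re)^2 + (t*g.im)^2
          + (t*h.re)^2 + (t*h.im)^2 + (t*k.re)^2 + (t*k.im)^2) := by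
    simp only [Complex.sq_norm, Complex.normSq_apply, Complex.add_re,
      Complex.add_im, Complex.mul_re, Complex.mul_im, Complex.neg_re, Complex.neg_im,
      Complex.ofReal_re, Complex.ofReal_im]
    ring
  rw [expand]
  positivity

lemma aux_upper (s t : ℝ) : ‖Hst s t‖ ≤ Real.sqrt (s^2+t^2) := by
  rw [Matrix.l2_opNorm_def]
  refine ContinuousLinearMap.opNorm_le_bound _ (Real.sqrt_nonneg _) fun x => ?_
  have happ : (LinearEquiv.trans Matrix.toEuclideanLin LinearMap.toContinuousLinearMap
      (Hst s t)) x
      = (WithLp.equiv 2 ((Fin 3 × Fin 3) → ℂ)).symm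
          (Hst s t *ᵥ (WithLp.equiv 2 ((Fin 3 × Fin 3) → ℂ) x)) := rfl
  rw [happ, Hst_mulVec, EuclideanSpace.norm_eq, EuclideanSpace.norm_eq,
    ← Real.sqrt_sq (Real.sqrt_nonneg (s^2+t^2)), ← Real.sqrt_mul (sq_nonneg _),
    Real.sq_sqrt (by positivity : (0:ℝ) ≤ s^2+t^2)]
  apply Real.sqrt_le_sqrt
  simp only [Fintype.sum_prod_type, Fin.sum_univ_three, WithLp.equiv_symm_apply, WithLp.equiv_apply, WithLp.ofLp_toLp,
    Matrix.cons_val', Matrix.cons_val_zero, Matrix.cons_val_one, Matrix.head_cons,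
    Matrix.cons_val_two, Matrix.tail_cons, Matrix.empty_val', Matrix.cons_val_fin_one,
    Matrix.head_fin_const]
  have := aux_key s t (x (0,0)) (x (0,2)) (x (2,0)) (x (2,2)) (x (1,1)) (x (0,1)) (x (2,1))
    (x (1,0)) (x (1,2))
  linarith

lemma aux_lower (s t : ℝ) (hs : 0 ≤ s) (ht : 0 ≤ t) :
    Real.sqrt (s^2+t^2) ≤ ‖Hst s t‖ := by
  rcases eq_or_ne (s^2+t^2) 0 with h0 | h0
  · rw [h0, Real.sqrt_zero]; exact norm_nonneg _
  set r := Real.sqrt (s^2+t^2) with hrdef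
  have hr0 : 0 ≤ r := Real.sqrt_nonneg _
  have hr2 : r^2 = s^2+t^2 := Real.sq_sqrt (by positivity)
  have hrpos : 0 < r := Real.sqrt_pos.mpr (lt_of_le_of_ne (by positivity) (Ne.symm h0))
  have hr2C : (r:ℂ)^2 = (s:ℂ)^2+(t:ℂ)^2 := by exact_mod_cast congrArg Complex.ofReal hr2
  set V : (Fin 3 × Fin 3) → ℂ := fun p =>
    ![![(((r+t)/2:ℝ):ℂ), 0, (((r-t)/2:ℝ):ℂ)], ![0, ((s:ℝ):ℂ), 0],
      ![(((r-t)/2:ℝ):ℂ), 0, (((r+t)/2:ℝ):ℂ)]] p.1 p.2 with hVdef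
  have hHV : Hst s t *ᵥ V = (r:ℂ) • V := by
    rw [Hst_mulVec]
    funext p
    obtain ⟨i, j⟩ := p
    fin_cases i <;> fin_cases j <;>
      simp [hVdef] <;> push_cast <;> ring_nf <;>
      first
        | ring1
        | linear_combination hr2C/2
        | linear_combination -hr2C/2
  set xv : EuclideanSpace ℂ (Fin 3 × Fin 3) := (WithLp.equiv 2 ((Fin 3 × Fin 3) → ℂ)).symm V
    with hxv
  have hmv := Matrix.l2_opNorm_mulVec (Hst s t) xv
  rw [show (Hst s t *ᵥ xv) = (r:ℂ) • V from hHV,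
    show ((EuclideanSpace.equiv (Fin 3 × Fin 3) ℂ).symm ((r:ℂ) • V)) = (r:ℂ) • xv from rfl,
    norm_smul, Complex.norm_real, Real.norm_eq_abs, abs_of_nonneg hr0] at hmv
  have hvne : xv ≠ 0 := by
    intro h
    have h00 : V (0,0) = 0 := congrArg (fun v : EuclideanSpace ℂ (Fin 3 × Fin 3) => v (0,0)) h
    have : ((r+t)/2 : ℝ) = 0 := by
      have := h00
      simp only [hVdef, Matrix.cons_val', Matrix.cons_val_zero, Matrix.empty_val',
        Matrix.cons_val_fin_one] at this
      exact_mod_cast this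
    linarith
  exact le_of_mul_le_mul_right hmv (norm_pos_iff.mpr hvne)


/-- For `s, t ≥ 0`, the (ℓ² → ℓ²) operator norm of
`H_{s,t} = s·Sx⊗Sx + t·Sz⊗Sz` equals `√(s² + t²)`. -/
theorem Hst_opNorm (s t : ℝ) (hs : 0 ≤ s) (ht : 0 ≤ t) :
    ‖Hst s t‖ = Real.sqrt (s ^ 2 + t ^ 2) := by
  exact le_antisymm (aux_upper s t) (aux_lower s t hs ht)
end
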